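/- Let Φ : [0, ℓ] → ℝ^{n×n} be continuous and let Ψ : [0, ℓ] → ℝ^{n×n} be twice continuously differentiable with Ψ''(t) = Φ(t)Ψ(t) for all t ∈ [0, ℓ], Ψ(0) = A and Ψ'(0) = B. Let λ = max_{0 ≤ t ≤ ℓ} ‖Φ(t)‖₂ and assume λ > 0. Then for all t ∈ [0, ℓ], ‖Ψ(t)‖₂ ≤ ‖A‖₂ cosh(√λ t) + (‖B‖₂/√λ) sinh(√λ t). -/

import Mathlib

open Set Matrix

/-- The spectral (ℓ² operator) norm of a real square matrix. -/
noncomputable def specNorm {n : ℕ} (A : Matrix (Fin n) (Fin n) ℝ) : ℝ :=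
  ‖LinearMap.toContinuousLinearMap (Matrix.toEuclideanLin A)‖

open Filter Topology in
private lemma slope_norm_tendsto {E : Type*} [NormedAddCommGroup E] [NormedSpace ℝ E]
    {f : ℝ → E} {d : E} {x : ℝ} (hf : HasDerivAt f d x) :
    Tendsto (fun z => ‖slope f x z‖) (𝓝[>] x) (𝓝 ‖d‖) :=
  ((hasDerivAt_iff_tendsto_slope.1 hf).mono_left
    (nhdsWithin_mono _ fun z hz => Set.mem_compl_singleton_iff.2 (ne_of_gt hz))).norm

private lemma slope_norm_le {E : Type*} [NormedAddCommGroup E] [NormedSpace ℝ E]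
    (f : ℝ → E) {x z : ℝ} (hxz : x < z) :
    (z - x)⁻¹ * (‖f z‖ - ‖f x‖) ≤ ‖slope f x z‖ := by
  have hpos : (0:ℝ) < z - x := sub_pos.2 hxz
  have h1 : ‖f z‖ - ‖f x‖ ≤ ‖f z - f x‖ := norm_sub_norm_le _ _
  have h2 : ‖slope f x z‖ = (z - x)⁻¹ * ‖f z - f x‖ := by
    rw [slope, vsub_eq_sub, norm_smul, Real.norm_eq_abs, abs_of_pos (inv_pos.2 hpos)]
  rw [h2]
  exact mul_le_mul_of_nonneg_left h1 (inv_pos.2 hpos).le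

open Filter Topology in
/-- Abstract two-step Grönwall bound for a second-order ODE `f'' = h` with `‖h‖ ≤ λ ‖f‖`. -/
private lemma ode2_cosh_bound {E : Type*} [NormedAddCommGroup E] [NormedSpace ℝ E]
    {ℓ lam : ℝ} (hlam : 0 < lam) {f g h : ℝ → E}
    (hf : ∀ t ∈ Icc (0:ℝ) ℓ, HasDerivAt f (g t) t)
    (hg : ∀ t ∈ Icc (0:ℝ) ℓ, HasDerivAt g (h t) t)
    (hb : ∀ t ∈ Icc (0:ℝ) ℓ, ‖h t‖ ≤ lam * ‖f t‖) :
    ∀ t ∈ Icc (0:ℝ) ℓ, ‖f t‖ ≤ ‖f 0‖ * Real.cosh (Real.sqrt lam * t)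
      + (‖g 0‖ / Real.sqrt lam) * Real.sinh (Real.sqrt lam * t) := by
  intro t ht
  set r := Real.sqrt lam with hrdef
  have hr : 0 < r := Real.sqrt_pos.2 hlam
  have hrr : r * r = lam := Real.mul_self_sqrt hlam.le
  set V0 : ℝ := r * ‖f 0‖ + ‖g 0‖ with hV0
  set u : ℝ → ℝ := fun s => r * ‖f s‖ + ‖g s‖ with hu
  have contf : ContinuousOn f (Icc 0 ℓ) := fun x hx =>
    (hf x hx).continuousAt.continuousWithinAt
  have contg : ContinuousOn g (Icc 0 ℓ) := fun x hx =>
    (hg x hx).continuousAt.continuousWithinAt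
  have contu : ContinuousOn u (Icc 0 ℓ) :=
    (continuousOn_const.mul contf.norm).add contg.norm
  -- Step 1 : Grönwall for `u`.
  have step1 : ∀ x ∈ Icc (0:ℝ) ℓ, u x ≤ V0 * Real.exp (r * x) := by
    intro x hx
    have key1 : ∀ x ∈ Ico (0:ℝ) ℓ, ∀ ρ, r * ‖g x‖ + ‖h x‖ < ρ →
        ∃ᶠ z in 𝓝[>] x, (z - x)⁻¹ * (u z - u x) < ρ := by
      intro x hx ρ hρ
      have hx' : x ∈ Icc (0:ℝ) ℓ := Ico_subset_Icc_self hx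
      have T : Tendsto (fun z => r * ‖slope f x z‖ + ‖slope g x z‖) (𝓝[>] x)
          (𝓝 (r * ‖g x‖ + ‖h x‖)) :=
        ((slope_norm_tendsto (hf x hx')).const_mul r).add (slope_norm_tendsto (hg x hx'))
      refine Filter.Eventually.frequently ?_
      filter_upwards [T.eventually_lt_const hρ, self_mem_nhdsWithin] with z h1 h2
      have hxz : x < z := h2
      have hpos : (0:ℝ) < z - x := sub_pos.2 hxz
      have e1 := slope_norm_le f hxz
      have e3 := slope_norm_le g hxz
      have expand : (z - x)⁻¹ * (u z - u x)
          = r * ((z - x)⁻¹ * (‖f z‖ - ‖f x‖)) + (z - x)⁻¹ * (‖g z‖ - ‖g x‖) := by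
        simp only [hu]; ring
      rw [expand]
      have := add_le_add (mul_le_mul_of_nonneg_left e1 hr.le) e3
      linarith
    have := le_gronwallBound_of_liminf_deriv_right_le
      (f := u) (f' := fun s => r * ‖g s‖ + ‖h s‖) (δ := V0) (K := r) (ε := 0)
      contu key1 le_rfl
      (fun s hs => by
        have hs' : s ∈ Icc (0:ℝ) ℓ := Ico_subset_Icc_self hs
        have hb' : ‖h s‖ ≤ r * r * ‖f s‖ := by rw [hrr]; exact hb s hs'
        show r * ‖g s‖ + ‖h s‖ ≤ r * (r * ‖f s‖ + ‖g s‖) + 0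
        nlinarith [hb']) x hx
    rwa [gronwallBound_ε0, sub_zero] at this
  -- Step 2 : comparison with the cosh/sinh boundary plus an ε-perturbation.
  set C : ℝ → ℝ := fun s => ‖f 0‖ * Real.cosh (r * s) + (‖g 0‖ / r) * Real.sinh (r * s)
    with hC
  have hCder : ∀ x : ℝ, HasDerivAt C
      (r * ‖f 0‖ * Real.sinh (r * x) + ‖g 0‖ * Real.cosh (r * x)) x := by
    intro x
    have h1 : HasDerivAt (fun s : ℝ => r * s) r x := by
      simpa using (hasDerivAt_id x).const_mul r
    have := (h1.cosh.const_mul (‖f 0‖)).add (h1.sinh.const_mul (‖g 0‖ / r))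
    refine this.congr_deriv ?_
    field_simp
  have iden : ∀ x : ℝ, r * C x + (r * ‖f 0‖ * Real.sinh (r * x) + ‖g 0‖ * Real.cosh (r * x))
      = V0 * Real.exp (r * x) := by
    intro x
    have hcs := Real.cosh_add_sinh (r * x)
    have e1 : r * ((‖g 0‖ / r) * Real.sinh (r * x)) = ‖g 0‖ * Real.sinh (r * x) := by
      field_simp
    simp only [hC, hV0]
    rw [mul_add, e1, ← hcs]
    ring
  have key2 : ∀ ε : ℝ, 0 < ε → ‖f t‖ ≤ C t + ε * Real.exp (2 * r * t) := by
    intro ε hε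
    set Bf : ℝ → ℝ := fun s => C s + ε * Real.exp (2 * r * s) with hBf
    set Bf' : ℝ → ℝ := fun s =>
      (r * ‖f 0‖ * Real.sinh (r * s) + ‖g 0‖ * Real.cosh (r * s))
        + ε * (2 * r * Real.exp (2 * r * s)) with hBf'
    have hBder : ∀ x : ℝ, HasDerivAt Bf (Bf' x) x := by
      intro x
      have h2 : HasDerivAt (fun s : ℝ => 2 * r * s) (2 * r) x := by
        simpa using (hasDerivAt_id x).const_mul (2 * r)
      have := (hCder x).add ((h2.exp).const_mul ε)
      refine this.congr_deriv ?_
      simp only [hBf']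
      ring
    have := image_le_of_liminf_slope_right_lt_deriv_boundary
      (f := fun s => ‖f s‖) (f' := fun s => ‖g s‖) (B := Bf) (B' := Bf')
      contf.norm
      (by
        intro x hx ρ hρ
        have hx' : x ∈ Icc (0:ℝ) ℓ := Ico_subset_Icc_self hx
        refine Filter.Eventually.frequently ?_
        filter_upwards [(slope_norm_tendsto (hf x hx')).eventually_lt_const hρ,
          self_mem_nhdsWithin] with z h1 h2
        have hxz : x < z := h2
        have := slope_norm_le f hxz
        have hsl : slope (fun s => ‖f s‖) x z = (z - x)⁻¹ * (‖f z‖ - ‖f x‖) := by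
          rw [slope_def_field]; rw [div_eq_inv_mul]
        rw [hsl]
        linarith)
      (by
        simp only [hBf, hC, mul_zero, Real.cosh_zero, Real.sinh_zero, mul_one,
          Real.exp_zero]
        linarith [hε])
      hBder
      (by
        intro x hx hcontact
        have h1 : u x ≤ V0 * Real.exp (r * x) := step1 x (Ico_subset_Icc_self hx)
        have e2pos : 0 < Real.exp (2 * r * x) := Real.exp_pos _
        have hprod : 0 < r * (ε * Real.exp (2 * r * x)) :=
          mul_pos hr (mul_pos hε e2pos)
        have hiden := iden x
        have hux : r * ‖f x‖ + ‖g x‖ ≤ V0 * Real.exp (r * x) := h1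
        have hc : ‖f x‖ = C x + ε * Real.exp (2 * r * x) := hcontact
        rw [hc] at hux
        show ‖g x‖ < r * ‖f 0‖ * Real.sinh (r * x) + ‖g 0‖ * Real.cosh (r * x)
          + ε * (2 * r * Real.exp (2 * r * x))
        nlinarith [hux, hiden, hprod])
      ht
    simpa only [hBf] using this
  -- let ε → 0
  by_contra hlt
  push_neg at hlt
  have hCt : C t < ‖f t‖ := hlt
  have hexp : 0 < Real.exp (2 * r * t) := Real.exp_pos _
  have hεpos : 0 < (‖f t‖ - C t) / 2 / Real.exp (2 * r * t) :=
    div_pos (div_pos (by linarith) two_pos) hexp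
  have := key2 _ hεpos
  rw [div_mul_cancel₀ _ hexp.ne'] at this
  linarith

section SpecNormMul
open scoped Matrix.Norms.L2Operator

private lemma specNorm_mul_le {n : ℕ} (M N : Matrix (Fin n) (Fin n) ℝ) :
    specNorm (M * N) ≤ specNorm M * specNorm N :=
  Matrix.l2_opNorm_mul M N

end SpecNormMul

/-- cosh/sinh bound for the solution of the matrix ODE `Ψ'' = Φ Ψ`. -/
theorem matrix_ode_cosh_bound
    (n : ℕ) (ℓ : ℝ) (hℓ : 0 ≤ ℓ)
    (Φ Ψ Ψ' : ℝ → Matrix (Fin n) (Fin n) ℝ)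
    (A B : Matrix (Fin n) (Fin n) ℝ)
    (hΦcont : ∀ i j, ContinuousOn (fun t => Φ t i j) (Icc 0 ℓ))
    (hΨ : ∀ t ∈ Icc 0 ℓ, ∀ i j, HasDerivAt (fun s => Ψ s i j) (Ψ' t i j) t)
    (hΨ' : ∀ t ∈ Icc 0 ℓ, ∀ i j, HasDerivAt (fun s => Ψ' s i j) ((Φ t * Ψ t) i j) t)
    (hA : Ψ 0 = A) (hB : Ψ' 0 = B)
    (lam : ℝ)
    (hlam : IsGreatest ((fun t => specNorm (Φ t)) '' Icc 0 ℓ) lam)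
    (hlampos : 0 < lam) :
    ∀ t ∈ Icc 0 ℓ,
      specNorm (Ψ t) ≤ specNorm A * Real.cosh (Real.sqrt lam * t)
        + (specNorm B / Real.sqrt lam) * Real.sinh (Real.sqrt lam * t) := by
  classical
  set Eqv : Matrix (Fin n) (Fin n) ℝ ≃ₗ[ℝ]
      (EuclideanSpace ℝ (Fin n) →L[ℝ] EuclideanSpace ℝ (Fin n)) :=
    Matrix.toEuclideanLin.trans LinearMap.toContinuousLinearMap with hEqv
  have hspec : ∀ M : Matrix (Fin n) (Fin n) ℝ, specNorm M = ‖Eqv M‖ := fun M => rfl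
  -- representation of `Eqv` as a finite sum of entrywise scalar multiples
  have rep : ∀ M : Matrix (Fin n) (Fin n) ℝ,
      Eqv M = ∑ i, ∑ j, M i j • Eqv (Matrix.single i j 1) := by
    intro M
    have : M = ∑ i, ∑ j, M i j • Matrix.single i j (1:ℝ) := by
      conv_lhs => rw [Matrix.matrix_eq_sum_single M]
      simp [Matrix.smul_single]
    calc Eqv M = Eqv (∑ i, ∑ j, M i j • Matrix.single i j (1:ℝ)) := by rw [← this]
      _ = ∑ i, ∑ j, M i j • Eqv (Matrix.single i j 1) := by
          rw [map_sum]
          refine Finset.sum_congr rfl fun i _ => ?_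
          rw [map_sum]
          exact Finset.sum_congr rfl fun j _ => Eqv.map_smul _ _
  have deriv_transfer : ∀ (P : ℝ → Matrix (Fin n) (Fin n) ℝ)
      (Q : Matrix (Fin n) (Fin n) ℝ) (x : ℝ),
      (∀ i j, HasDerivAt (fun s => P s i j) (Q i j) x) →
      HasDerivAt (fun s => Eqv (P s)) (Eqv Q) x := by
    intro P Q x hP
    have hsum : HasDerivAt (fun s => ∑ i, ∑ j, P s i j • Eqv (Matrix.single i j 1))
        (∑ i, ∑ j, Q i j • Eqv (Matrix.single i j 1)) x := by
      apply HasDerivAt.fun_sum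
      intro i _
      apply HasDerivAt.fun_sum
      intro j _
      exact (hP i j).smul_const (Eqv (Matrix.single i j 1))
    have e : (fun s => Eqv (P s))
        = fun s => ∑ i, ∑ j, P s i j • Eqv (Matrix.single i j 1) :=
      funext fun s => rep (P s)
    rw [e, rep Q]
    exact hsum
  intro t ht
  have main := ode2_cosh_bound (E := EuclideanSpace ℝ (Fin n) →L[ℝ] EuclideanSpace ℝ (Fin n))
    hlampos
    (f := fun s => Eqv (Ψ s)) (g := fun s => Eqv (Ψ' s)) (h := fun s => Eqv (Φ s * Ψ s))
    (fun s hs => deriv_transfer Ψ (Ψ' s) s (hΨ s hs))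
    (fun s hs => deriv_transfer Ψ' (Φ s * Ψ s) s (hΨ' s hs))
    (by
      intro s hs
      have h1 : specNorm (Φ s * Ψ s) ≤ specNorm (Φ s) * specNorm (Ψ s) :=
        specNorm_mul_le _ _
      have h2 : specNorm (Φ s) ≤ lam := hlam.2 ⟨s, hs, rfl⟩
      have h3 : (0:ℝ) ≤ specNorm (Ψ s) := by rw [hspec]; exact norm_nonneg _
      calc ‖Eqv (Φ s * Ψ s)‖ = specNorm (Φ s * Ψ s) := (hspec _).symm
        _ ≤ specNorm (Φ s) * specNorm (Ψ s) := h1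
        _ ≤ lam * specNorm (Ψ s) := mul_le_mul_of_nonneg_right h2 h3
        _ = lam * ‖Eqv (Ψ s)‖ := by rw [hspec]) t ht
  rw [hspec A, hspec B, ← hA, ← hB, hspec (Ψ t)]
  exact main
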